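/- Let gcd(m,n) = 1 and p an (m,n)-parking function. Then the iterates p^k · x_0 of the centroid x_0 of the fundamental alcove converge to the unique fixed point x_p of p; in fact p^k · x_0 = x_p for all sufficiently large k. -/

import Mathlib

/-- The shift during the action of letter `i` on `ℝ^m`: add `m` to coordinate `i`
and subtract `1` from every coordinate. -/
def shiftVec (m : ℕ) (i : Fin m) (x : Fin m → ℝ) : Fin m → ℝ :=
  fun j => x j - 1 + if j = i then (m : ℝ) else 0

/-- Sort the coordinates of a vector into weakly increasing order. -/
noncomputable def sortVec {m : ℕ} (x : Fin m → ℝ) : Fin m → ℝ := x ∘ Tuple.sort x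

/-- The action of the letter `i ∈ [m]` on `V^m`: shift, then re-sort. -/
noncomputable def letterV (m : ℕ) (i : Fin m) (x : Fin m → ℝ) : Fin m → ℝ :=
  sortVec (shiftVec m i x)

/-- `stepsV m p x i = p_{i-1} ⋯ p_1 p_0 ⋅ x`: the word acts letter by letter, the
letter `p 0` (rightmost) acting first. -/
noncomputable def stepsV (m : ℕ) (p : ℕ → Fin m) (x : Fin m → ℝ) : ℕ → (Fin m → ℝ)
  | 0 => x
  | k+1 => letterV m (p k) (stepsV m p x k)

/-- Membership in the Weyl chamber `V^m`: coordinates sum to `0` and are weakly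
increasing. -/
def InV (m : ℕ) (x : Fin m → ℝ) : Prop := (∑ j, x j) = 0 ∧ Monotone x

/-- The Euclidean norm on `ℝ^m`. -/
noncomputable def eNorm {m : ℕ} (x : Fin m → ℝ) : ℝ := Real.sqrt (∑ j, (x j) ^ 2)

/-- `p` (a word of length `n` in `[m]`, extended arbitrarily) is an
`(m,n)`-parking function: `#{j < n : p_j < i} ≥ i·n/m` for all `1 ≤ i ≤ m`. -/
def IsParking (m n : ℕ) (p : ℕ → Fin m) : Prop :=
  ∀ i : ℕ, 1 ≤ i → i ≤ m →
    i * n ≤ ((Finset.range n).filter (fun j => (p j : ℕ) < i)).card * m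

/-- The centroid of the fundamental alcove: coordinates `0, 1, …, m-1`, centered
so they sum to `0`. -/
noncomputable def fundCentroid (m : ℕ) : Fin m → ℝ :=
  fun j => (j : ℝ) - ((m : ℝ) - 1) / 2

namespace CentroidAux
open Finset

variable {m : ℕ}

lemma residue_eq {m : ℕ} {a b w : ℤ} (ha : 0 ≤ a) (ha' : a < m) (hb : 0 ≤ b) (hb' : b < m)
    (h : a - b = m * w) : a = b := by
  have hm0 : (0:ℤ) ≤ m := Int.ofNat_nonneg m
  rcases lt_trichotomy w 0 with h1 | h1 | h1
  · have h2 : (m:ℤ) * w ≤ (m:ℤ) * (-1) := mul_le_mul_of_nonneg_left (by omega) hm0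
    rw [mul_neg_one] at h2
    linarith
  · rw [h1, mul_zero] at h; omega
  · have h2 : (m:ℤ) * 1 ≤ (m:ℤ) * w := mul_le_mul_of_nonneg_left (by omega) hm0
    rw [mul_one] at h2
    linarith

lemma eq_m_of (m : ℕ) (hm : 0 < m) {S w : ℤ} (h : S = m * w) (h0 : 0 < S) (h2 : S < 2 * m) :
    S = m := by
  have hm' : (0:ℤ) < m := by exact_mod_cast hm
  have hw : w = 1 := by
    rcases lt_trichotomy w 1 with h1 | h1 | h1
    · have hw0 : w ≤ 0 := by omega
      have : (m:ℤ) * w ≤ 0 := mul_nonpos_of_nonneg_of_nonpos hm'.le hw0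
      omega
    · exact h1
    · have hw2 : 2 ≤ w := by omega
      have : 2 * (m:ℤ) ≤ m * w := by nlinarith
      omega
  rw [h, hw, mul_one]



lemma sortVec_monotone (x : Fin m → ℝ) : Monotone (sortVec x) := Tuple.monotone_sort x

lemma sortVec_comp_perm (x : Fin m → ℝ) (σ : Equiv.Perm (Fin m)) :
    sortVec (x ∘ σ) = sortVec x := Tuple.comp_perm_comp_sort_eq_comp_sort

lemma monovary_of_monotone {a b : Fin m → ℝ} (ha : Monotone a) (hb : Monotone b) :
    Monovary a b := fun i j h =>
  ha (le_of_not_gt fun hji => absurd (hb hji.le) (not_le.2 h))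

lemma sq_sum_perm_le {a b : Fin m → ℝ} (ha : Monotone a) (hb : Monotone b)
    (ν : Equiv.Perm (Fin m)) :
    ∑ j, (a j - b j)^2 ≤ ∑ j, (a j - b (ν j))^2 := by
  have h1 : ∑ j, (b (ν j))^2 = ∑ j, (b j)^2 := Equiv.sum_comp ν (fun j => (b j)^2)
  have h2 : ∑ j, a j * b (ν j) ≤ ∑ j, a j * b j :=
    (monovary_of_monotone ha hb).sum_mul_comp_perm_le_sum_mul
  have e1 : ∑ j, (a j - b j)^2 = ∑ j, ((a j)^2 + (b j)^2 - 2 * (a j * b j)) := by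
    apply Finset.sum_congr rfl; intro j _; ring
  have e2 : ∑ j, (a j - b (ν j))^2
      = ∑ j, ((a j)^2 + (b (ν j))^2 - 2 * (a j * b (ν j))) := by
    apply Finset.sum_congr rfl; intro j _; ring
  rw [e1, e2, Finset.sum_sub_distrib, Finset.sum_sub_distrib,
    Finset.sum_add_distrib, Finset.sum_add_distrib, h1, ← Finset.mul_sum, ← Finset.mul_sum]
  linarith

/-- contraction -/
lemma key_le (u w : Fin m → ℝ) :
    ∑ j, (sortVec u j - sortVec w j)^2 ≤ ∑ j, (u j - w j)^2 := by
  set σ := Tuple.sort u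
  set τ := Tuple.sort w
  have h0 : ∑ j, (u j - w j)^2 = ∑ j, (u (σ j) - w (σ j))^2 :=
    (Equiv.sum_comp σ (fun j => (u j - w j)^2)).symm
  have hw : ∀ j, w (σ j) = sortVec w ((τ.symm) (σ j)) := by
    intro j; show w (σ j) = w (τ (τ.symm (σ j))); rw [Equiv.apply_symm_apply]
  have h1 : ∑ j, (u (σ j) - w (σ j))^2
      = ∑ j, (sortVec u j - sortVec w ((σ.trans τ.symm) j))^2 := by
    apply Finset.sum_congr rfl; intro j _; rw [hw]; rfl
  rw [h0, h1]
  exact sq_sum_perm_le (sortVec_monotone u) (sortVec_monotone w) (σ.trans τ.symm)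

/-- equality case: simultaneous sortability -/
lemma key_eq (u w : Fin m → ℝ)
    (h : ∑ j, (sortVec u j - sortVec w j)^2 = ∑ j, (u j - w j)^2) :
    ∃ π : Equiv.Perm (Fin m), sortVec u = u ∘ π ∧ sortVec w = w ∘ π := by
  classical
  set σ₁ := Tuple.sort u with hσ₁
  set a : Fin m → ℝ := sortVec u with ha
  set c : Fin m → ℝ := w ∘ σ₁ with hc
  have hsc : sortVec c = sortVec w := sortVec_comp_perm w σ₁
  set b : Fin m → ℝ := sortVec w with hb
  set σ₂ := Tuple.sort c with hσ₂
  have hcb : ∀ j, c j = b (σ₂.symm j) := by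
    intro j
    have : b (σ₂.symm j) = (c ∘ σ₂) (σ₂.symm j) := by rw [← hsc]; rfl
    rw [this]; simp
  have hmono_a : Monotone a := sortVec_monotone u
  have hmono_b : Monotone b := sortVec_monotone w
  -- rewrite h as equality of inner products
  have hsum0 : ∑ j, (u j - w j)^2 = ∑ j, (a j - c j)^2 := by
    have := (Equiv.sum_comp σ₁ (fun j => (u j - w j)^2)).symm
    rw [this]; rfl
  have hsq : ∑ j, (c j)^2 = ∑ j, (b j)^2 := by
    have := Equiv.sum_comp σ₂ (fun j => (c j)^2)
    rw [← this]
    apply Finset.sum_congr rfl; intro j _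
    rw [hcb (σ₂ j)]; simp
  have hip : ∑ j, a j * b (σ₂.symm j) = ∑ j, a j * b j := by
    have e1 : ∑ j, (a j - c j)^2
        = ∑ j, ((a j)^2 + (c j)^2 - 2 * (a j * c j)) := by
      apply Finset.sum_congr rfl; intro j _; ring
    have e2 : ∑ j, (a j - b j)^2
        = ∑ j, ((a j)^2 + (b j)^2 - 2 * (a j * b j)) := by
      apply Finset.sum_congr rfl; intro j _; ring
    have h' : ∑ j, (a j - b j)^2 = ∑ j, (a j - c j)^2 := by
      rw [← hsum0]; exact h
    rw [e1, e2] at h'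
    rw [Finset.sum_sub_distrib, Finset.sum_sub_distrib, Finset.sum_add_distrib,
      Finset.sum_add_distrib, hsq, ← Finset.mul_sum, ← Finset.mul_sum] at h'
    have : ∑ j, a j * c j = ∑ j, a j * b j := by linarith
    rw [← this]
    apply Finset.sum_congr rfl; intro j _; rw [hcb j]
  have hmv : Monovary a (b ∘ σ₂.symm) :=
    ((monovary_of_monotone hmono_a hmono_b).sum_mul_comp_perm_eq_sum_mul_iff
      (σ := σ₂.symm)).1 hip
  have hmvac : Monovary a c := by
    intro i j hij
    apply hmv
    show b (σ₂.symm i) < b (σ₂.symm j)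
    rw [← hcb, ← hcb]; exact hij
  -- a ∘ σ₂ is monotone
  have hmas : Monotone (a ∘ σ₂) := by
    intro i j hij
    rcases lt_or_eq_of_le hij with hlt | heq
    · rcases lt_or_eq_of_le (Tuple.monotone_sort c hij) with hclt | hceq
      · exact hmvac hclt
      · have : σ₂ i < σ₂ j := by
          have hs := (Tuple.eq_sort_iff (f := c) (σ := σ₂)).1 hσ₂
          exact hs.2 i j hlt hceq
        exact hmono_a this.le
    · rw [heq]
  have haσ₂ : a ∘ σ₂ = a := by
    have := Tuple.unique_monotone (f := a) (σ := σ₂) (τ := Equiv.refl _) hmas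
      (by simpa using hmono_a)
    simpa using this
  refine ⟨σ₂.trans σ₁, ?_, ?_⟩
  · funext j
    have : (a ∘ σ₂) j = a j := congrFun haσ₂ j
    show sortVec u j = u (σ₁ (σ₂ j))
    calc sortVec u j = a j := rfl
    _ = a (σ₂ j) := this.symm ▸ rfl
    _ = u (σ₁ (σ₂ j)) := rfl
  · funext j
    show sortVec w j = w (σ₁ (σ₂ j))
    calc sortVec w j = sortVec c j := hsc.symm ▸ rfl
    _ = c (σ₂ j) := rfl
    _ = w (σ₁ (σ₂ j)) := rfl


noncomputable def cumPerm (m : ℕ) (Pi : ℕ → Equiv.Perm (Fin m)) : ℕ → Equiv.Perm (Fin m)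
  | 0 => Equiv.refl _
  | s+1 => (cumPerm m Pi s).trans (Pi s).symm


lemma vec_step (q : ℕ → Fin m) (Pi : ℕ → Equiv.Perm (Fin m)) (vec : ℕ → Fin m → ℝ)
    (hstep : ∀ s, vec (s+1) = shiftVec m (q s) (vec s) ∘ (Pi s)) (s : ℕ) (b : Fin m) :
    vec (s+1) (cumPerm m Pi (s+1) b)
      = vec s (cumPerm m Pi s b) - 1
        + (if cumPerm m Pi s b = q s then (m:ℝ) else 0) := by
  rw [hstep]
  show shiftVec m (q s) (vec s) ((Pi s) ((Pi s).symm (cumPerm m Pi s b))) = _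
  rw [Equiv.apply_symm_apply]; rfl

lemma vec_invariant (q : ℕ → Fin m) (Pi : ℕ → Equiv.Perm (Fin m)) (vec : ℕ → Fin m → ℝ)
    (hstep : ∀ s, vec (s+1) = shiftVec m (q s) (vec s) ∘ (Pi s)) (s : ℕ) (b : Fin m) :
    ∃ z : ℤ, vec s (cumPerm m Pi s b) = vec 0 b - s + m * z := by
  induction s with
  | zero => exact ⟨0, by simp [cumPerm]⟩
  | succ s ih =>
    obtain ⟨z, hz⟩ := ih
    rw [vec_step q Pi vec hstep s b, hz]
    by_cases hc : cumPerm m Pi s b = q s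
    · exact ⟨z + 1, by rw [if_pos hc]; push_cast; ring⟩
    · exact ⟨z, by rw [if_neg hc]; push_cast; ring⟩

lemma pair_invariant (q : ℕ → Fin m) (Pi : ℕ → Equiv.Perm (Fin m))
    (vx vc : ℕ → Fin m → ℝ)
    (hx : ∀ s, vx (s+1) = shiftVec m (q s) (vx s) ∘ (Pi s))
    (hc : ∀ s, vc (s+1) = shiftVec m (q s) (vc s) ∘ (Pi s)) (s : ℕ) (b : Fin m) :
    vx s (cumPerm m Pi s b) - vc s (cumPerm m Pi s b) = vx 0 b - vc 0 b := by
  induction s with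
  | zero => simp [cumPerm]
  | succ s ih =>
    rw [vec_step q Pi vx hx s b, vec_step q Pi vc hc s b]
    set e := (if cumPerm m Pi s b = q s then (m:ℝ) else 0)
    linarith

lemma exists_flip {P : ℕ → Prop} {s₁ s₂ : ℕ} (h1 : ¬ P s₁) (h2 : P s₂) (h12 : s₁ ≤ s₂) :
    ∃ s, ¬ P s ∧ P (s+1) := by
  by_contra hcon
  push_neg at hcon
  have hall : ∀ k, ¬ P (s₁ + k) := by
    intro k; induction k with
    | zero => simpa using h1
    | succ k ih => exact hcon _ ih
  obtain ⟨k, rfl⟩ := Nat.exists_eq_add_of_le h12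
  exact hall k h2

lemma exists_nat_mul_cong (m n : ℕ) (hm : 0 < m) (hcop : Nat.gcd m n = 1) (c : ℤ) (t₀ : ℕ) :
    ∃ t : ℕ, t₀ ≤ t ∧ ∃ z : ℤ, (t:ℤ) * n = c + m * z := by
  have hb := Nat.gcd_eq_gcd_ab m n
  rw [hcop] at hb
  set A := Nat.gcdA m n with hA
  set B := Nat.gcdB m n with hB
  have h1 : (1:ℤ) = m * A + n * B := by exact_mod_cast hb
  set T : ℤ := c * B + m * ((t₀ : ℤ) + |c * B|) with hT
  have hm1 : (1:ℤ) ≤ m := by exact_mod_cast hm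
  have hT0 : (t₀ : ℤ) ≤ T := by
    have h2 : -(|c*B|) ≤ c * B := neg_abs_le _
    have h3 : (t₀:ℤ) + |c*B| ≤ m * ((t₀:ℤ) + |c*B|) := by
      nlinarith [abs_nonneg (c*B), Int.ofNat_nonneg t₀]
    linarith
  refine ⟨T.toNat, ?_, ⟨((t₀:ℤ) + |c*B|) * n - c * A, ?_⟩⟩
  · exact_mod_cast le_trans hT0 (le_of_eq (Int.toNat_of_nonneg
      (le_trans (Int.ofNat_nonneg t₀) hT0)).symm)
  · have hTT : ((T.toNat : ℤ)) = T := Int.toNat_of_nonneg (le_trans (Int.ofNat_nonneg t₀) hT0)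
    rw [hTT, hT]
    linear_combination (-c) * h1

lemma gauss_sum : ∀ m : ℕ, ∑ j : Fin m, (j:ℝ) = m * (m - 1) / 2 := by
  intro m
  induction m with
  | zero => simp
  | succ m ih =>
    rw [Fin.sum_univ_castSucc]
    simp only [Fin.coe_castSucc, Fin.val_last]
    rw [ih]; push_cast; ring

lemma sum_eq_sum_of_inj (s : Finset (Fin m)) (f : Fin m → ℤ) (T : Finset ℤ)
    (hmaps : ∀ a ∈ s, f a ∈ T) (hinj : ∀ a ∈ s, ∀ b ∈ s, f a = f b → a = b)
    (hcard : T.card = s.card) : ∑ a ∈ s, f a = ∑ x ∈ T, x := by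
  have himg : s.image f = T := by
    apply Finset.eq_of_subset_of_card_le
    · intro x hx; obtain ⟨a, ha, rfl⟩ := Finset.mem_image.1 hx; exact hmaps a ha
    · rw [hcard, Finset.card_image_of_injOn hinj]
  rw [← himg, Finset.sum_image hinj]

end CentroidAux

open CentroidAux in
/-- When `gcd(m,n) = 1` and `p` is an `(m,n)`-parking function with fixed point
`x_p`, the iterates `p^k ⋅ x_0` of the centroid of the fundamental alcove reach
`x_p` in finitely many steps: `p^k ⋅ x_0 = x_p` for all sufficiently large `k`. -/
theorem centroid_converges (m n : ℕ) (hm : 0 < m) (hn : 0 < n)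
    (hcop : Nat.gcd m n = 1) (p : ℕ → Fin m) (hpark : IsParking m n p)
    (xp : Fin m → ℝ) (hxp : InV m xp) (hfix : stepsV m p xp n = xp) :
    ∃ K : ℕ, ∀ k ≥ K, stepsV m (fun i => p (i % n)) (fundCentroid m) (n * k) = xp := by
  classical
  set pw : ℕ → Fin m := fun i => p (i % n) with hpw
  set X : ℕ → Fin m → ℝ := stepsV m pw (fundCentroid m) with hX
  set C : ℕ → Fin m → ℝ := stepsV m pw xp with hC
  have hXs : ∀ k, X (k+1) = sortVec (shiftVec m (pw k) (X k)) := fun k => by rw [hX]; rfl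
  have hX0 : X 0 = fundCentroid m := by rw [hX]; rfl
  have hCs : ∀ k, C (k+1) = sortVec (shiftVec m (pw k) (C k)) := fun k => by rw [hC]; rfl
  have hC0 : C 0 = xp := by rw [hC]; rfl
  -- basic monotonicity
  have hfc_mono : Monotone (fundCentroid m) := by
    intro i j hij
    have h1 : (i:ℕ) ≤ (j:ℕ) := hij
    have h2 : ((i:ℕ):ℝ) ≤ ((j:ℕ):ℝ) := by exact_mod_cast h1
    simp only [fundCentroid]
    linarith
  have hXmono : ∀ k, Monotone (X k) := by
    intro k
    cases k with
    | zero => rw [hX0]; exact hfc_mono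
    | succ k => rw [hXs k]; exact sortVec_monotone _
  have hCmono : ∀ k, Monotone (C k) := by
    intro k
    cases k with
    | zero => rw [hC0]; exact hxp.2
    | succ k => rw [hCs k]; exact sortVec_monotone _
  -- sums
  have hsum_letter : ∀ (i : Fin m) (y : Fin m → ℝ),
      ∑ j, sortVec (shiftVec m i y) j = ∑ j, y j := by
    intro i y
    have h1 : ∑ j, sortVec (shiftVec m i y) j = ∑ j, shiftVec m i y j :=
      Equiv.sum_comp (Tuple.sort (shiftVec m i y)) (shiftVec m i y)
    rw [h1]
    simp only [shiftVec]
    rw [Finset.sum_add_distrib, Finset.sum_sub_distrib,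
      Finset.sum_ite_eq' Finset.univ i (fun _ => (m:ℝ))]
    simp [Finset.card_univ]
  have hfc_sum : ∑ j, fundCentroid m j = 0 := by
    simp only [fundCentroid]
    have h2 : ∑ _j : Fin m, ((m:ℝ)-1)/2 = m * (((m:ℝ)-1)/2) := by
      rw [Finset.sum_const, Finset.card_univ, Fintype.card_fin, nsmul_eq_mul]
    rw [Finset.sum_sub_distrib, gauss_sum m, h2]
    ring
  have hXsum : ∀ k, ∑ j, X k j = 0 := by
    intro k
    induction k with
    | zero => rw [hX0]; exact hfc_sum
    | succ k ih => rw [hXs k, hsum_letter]; exact ih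
  -- lattice membership
  have hlat_step : ∀ (i : Fin m) (y : Fin m → ℝ),
      (∀ j, ∃ z:ℤ, y j = (z:ℝ) - ((m:ℝ)-1)/2) →
      ∀ j, ∃ z:ℤ, sortVec (shiftVec m i y) j = (z:ℝ) - ((m:ℝ)-1)/2 := by
    intro i y hy j
    have h0 : sortVec (shiftVec m i y) j = shiftVec m i y (Tuple.sort (shiftVec m i y) j) := rfl
    rw [h0]
    obtain ⟨z, hz⟩ := hy (Tuple.sort (shiftVec m i y) j)
    simp only [shiftVec, hz]
    by_cases hcnd : (Tuple.sort (shiftVec m i y) j) = i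
    · exact ⟨z - 1 + m, by rw [if_pos hcnd]; push_cast; ring⟩
    · exact ⟨z - 1, by rw [if_neg hcnd]; push_cast; ring⟩
  have hXlat : ∀ k j, ∃ z:ℤ, X k j = (z:ℝ) - ((m:ℝ)-1)/2 := by
    intro k
    induction k with
    | zero =>
      intro j; rw [hX0]
      exact ⟨(j:ℕ), by simp [fundCentroid]⟩
    | succ k ih =>
      intro j; rw [hXs k]; exact hlat_step (pw k) (X k) ih j
  -- periodicity of C
  have hagree : ∀ k, k ≤ n → stepsV m pw xp k = stepsV m p xp k := by
    intro k
    induction k with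
    | zero => intro _; rfl
    | succ k ih =>
      intro hk
      have h1 : pw k = p k := by
        rw [hpw]; simp only; rw [Nat.mod_eq_of_lt (Nat.lt_of_succ_le hk)]
      show letterV m (pw k) (stepsV m pw xp k) = letterV m (p k) (stepsV m p xp k)
      rw [h1, ih (Nat.le_of_succ_le hk)]
  have hCn0 : C n = xp := by rw [hC]; rw [hagree n le_rfl]; exact hfix
  have hCper : ∀ k, C (k + n) = C k := by
    intro k
    induction k with
    | zero => rw [Nat.zero_add, hCn0, hC0]
    | succ k ih =>
      have e : k + 1 + n = (k + n) + 1 := by omega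
      have hpwk : pw (k + n) = pw k := by
        rw [hpw]; simp only; rw [Nat.add_mod_right]
      rw [e, hCs (k+n), hCs k, hpwk, ih]
  have hCn : ∀ t, C (n * t) = xp := by
    intro t
    induction t with
    | zero => simpa using hC0
    | succ t ih =>
      have e : n*(t+1) = n*t + n := by ring
      rw [e, hCper, ih]
  -- gadget on C from time 0 : residues of xp
  set PiC : ℕ → Equiv.Perm (Fin m) := fun k => Tuple.sort (shiftVec m (pw k) (C k)) with hPiCd
  have hstepC : ∀ k, C (k+1) = shiftVec m (pw k) (C k) ∘ (PiC k) := by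
    intro k; rw [hCs k, hPiCd]; rfl
  have hinvC : ∀ s b, ∃ z : ℤ, C s (cumPerm m PiC s b) = xp b - s + m * z := by
    intro s b
    obtain ⟨z, hz⟩ := vec_invariant pw PiC C hstepC s b
    rw [hC0] at hz
    exact ⟨z, hz⟩
  -- Lemma I : coordinates of xp
  set b₀ : Fin m := ⟨0, hm⟩ with hb₀
  have hres : ∀ c : Fin m, ∃ j : Fin m, ∃ z : ℤ, xp j = xp b₀ - ((c:ℕ):ℝ) + m * z := by
    intro c
    obtain ⟨t, _, z₁, hz₁⟩ := exists_nat_mul_cong m n hm hcop ((c:ℕ):ℤ) 0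
    obtain ⟨z₂, hz₂⟩ := hinvC (n*t) b₀
    rw [hCn t] at hz₂
    refine ⟨cumPerm m PiC (n*t) b₀, z₂ - z₁, ?_⟩
    have hz₁' : ((n*t : ℕ):ℝ) = ((c:ℕ):ℝ) + m * (z₁:ℝ) := by
      have := congrArg (fun z : ℤ => (z:ℝ)) hz₁
      push_cast at this ⊢
      linarith
    rw [hz₂, hz₁']
    push_cast
    ring
  choose F Z hFZ using hres
  have hFinj : Function.Injective F := by
    intro c c' hcc
    have h1 := hFZ c
    have h2 := hFZ c'
    rw [hcc] at h1
    have h3 : ((c':ℕ):ℝ) - ((c:ℕ):ℝ) = m * ((Z c' : ℝ) - Z c) := by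
      rw [h1] at h2; linarith
    have h4 : ((c':ℕ):ℤ) - ((c:ℕ):ℤ) = m * (Z c' - Z c) := by exact_mod_cast h3
    have h5 : ((c':ℕ):ℤ) = ((c:ℕ):ℤ) :=
      residue_eq (Int.ofNat_nonneg _) (by exact_mod_cast c'.isLt)
        (Int.ofNat_nonneg _) (by exact_mod_cast c.isLt) h4
    have : (c':ℕ) = (c:ℕ) := by exact_mod_cast h5
    exact (Fin.ext this).symm
  have hFsurj : Function.Surjective F := Finite.surjective_of_injective hFinj
  have hIdiff : ∀ j j', ∃ z:ℤ, xp j - xp j' = (z:ℝ) := by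
    intro j j'
    obtain ⟨c, rfl⟩ := hFsurj j
    obtain ⟨c', rfl⟩ := hFsurj j'
    refine ⟨((c':ℕ):ℤ) - ((c:ℕ):ℤ) + m * (Z c - Z c'), ?_⟩
    rw [hFZ c, hFZ c']
    push_cast
    ring
  have hIinj : ∀ j j' (z:ℤ), xp j - xp j' = m * (z:ℝ) → j = j' := by
    intro j j' z hz
    obtain ⟨c, rfl⟩ := hFsurj j
    obtain ⟨c', rfl⟩ := hFsurj j'
    have h1 := hFZ c
    have h2 := hFZ c'
    have h3 : ((c':ℕ):ℝ) - ((c:ℕ):ℝ) = m * ((z:ℝ) - Z c + Z c') := by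
      rw [h1, h2] at hz; linarith [hz]
    have h4 : ((c':ℕ):ℤ) - ((c:ℕ):ℤ) = m * (z - Z c + Z c') := by exact_mod_cast h3
    have h5 : ((c':ℕ):ℤ) = ((c:ℕ):ℤ) :=
      residue_eq (Int.ofNat_nonneg _) (by exact_mod_cast c'.isLt)
        (Int.ofNat_nonneg _) (by exact_mod_cast c.isLt) h4
    have h6 : (c':ℕ) = (c:ℕ) := by exact_mod_cast h5
    rw [(Fin.ext h6 : c' = c)]
  have hIlat : ∀ j, ∃ z:ℤ, xp j = (z:ℝ) - ((m:ℝ)-1)/2 := by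
    have hsum0 : ∑ c, xp (F c) = 0 := by
      have he : ∑ c, xp (F c) = ∑ j, xp j :=
        Equiv.sum_comp (Equiv.ofBijective F ⟨hFinj, hFsurj⟩) xp
      rw [he]; exact hxp.1
    have hsum1 : ∑ c, xp (F c)
        = m * xp b₀ - m * ((m:ℝ)-1)/2 + m * ((∑ c, Z c : ℤ):ℝ) := by
      have hterm : ∀ c ∈ Finset.univ, xp (F c) = xp b₀ - ((c:ℕ):ℝ) + m * (Z c : ℝ) :=
        fun c _ => hFZ c
      rw [Finset.sum_congr rfl hterm, Finset.sum_add_distrib, Finset.sum_sub_distrib]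
      have h1 : ∑ _c : Fin m, xp b₀ = m * xp b₀ := by
        rw [Finset.sum_const, Finset.card_univ, Fintype.card_fin, nsmul_eq_mul]
      have h2 : ∑ c : Fin m, ((c:ℕ):ℝ) = m * ((m:ℝ)-1)/2 := by
        rw [gauss_sum m]
      have h3 : ∑ c : Fin m, (m:ℝ) * (Z c : ℝ) = m * ((∑ c, Z c : ℤ):ℝ) := by
        rw [← Finset.mul_sum]
        norm_cast
      rw [h1, h2, h3]
    have hm' : (m:ℝ) ≠ 0 := by
      have : (0:ℝ) < m := by exact_mod_cast hm
      linarith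
    have hA : xp b₀ = ((m:ℝ)-1)/2 - ((∑ c', Z c' : ℤ):ℝ) := by
      rw [hsum1] at hsum0
      have hfac : (m:ℝ) * (xp b₀ - (((m:ℝ)-1)/2 - ((∑ c', Z c' : ℤ):ℝ))) = 0 := by
        linear_combination hsum0
      rcases mul_eq_zero.1 hfac with h | h
      · exact absurd h hm'
      · linarith
    intro j
    obtain ⟨c, rfl⟩ := hFsurj j
    refine ⟨((m:ℤ) - 1 - ∑ c', Z c') - ((c:ℕ):ℤ) + m * Z c, ?_⟩
    rw [hFZ c, hA]
    push_cast
    ring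
  -- lattice for C
  have hClat : ∀ k j, ∃ z:ℤ, C k j = (z:ℝ) - ((m:ℝ)-1)/2 := by
    intro k
    induction k with
    | zero => intro j; rw [hC0]; exact hIlat j
    | succ k ih => intro j; rw [hCs k]; exact hlat_step (pw k) (C k) ih j
  -- the distance sequence
  set d : ℕ → ℝ := fun k => ∑ j, (X k j - C k j)^2 with hd
  have hdstep : ∀ k, d (k+1) ≤ d k := by
    intro k
    have h1 : d (k+1) = ∑ j, (sortVec (shiftVec m (pw k) (X k)) j
        - sortVec (shiftVec m (pw k) (C k)) j)^2 := by
      simp only [hd]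
      rw [hXs k, hCs k]
    have h2 : d k = ∑ j, (shiftVec m (pw k) (X k) j - shiftVec m (pw k) (C k) j)^2 := by
      simp only [hd]
      apply Finset.sum_congr rfl; intro j _
      simp only [shiftVec]; ring
    rw [h1, h2]
    exact key_le _ _
  have hdiffint : ∀ k j, ∃ w:ℤ, X k j - C k j = (w:ℝ) := by
    intro k j
    obtain ⟨z₁, h1⟩ := hXlat k j
    obtain ⟨z₂, h2⟩ := hClat k j
    exact ⟨z₁ - z₂, by rw [h1, h2]; push_cast; ring⟩
  have hdint : ∀ k, ∃ z:ℤ, d k = (z:ℝ) ∧ 0 ≤ z := by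
    intro k
    choose w hw using hdiffint k
    refine ⟨∑ j, (w j)^2, ?_, Finset.sum_nonneg fun j _ => sq_nonneg _⟩
    have h1 : d k = ∑ j, ((w j : ℝ))^2 := by
      simp only [hd]
      exact Finset.sum_congr rfl fun j _ => by rw [hw j]
    rw [h1]
    push_cast
    rfl
  choose dz hdz1 hdz2 using hdint
  set u : ℕ → ℕ := fun k => (dz k).toNat with hu
  have hcastu : ∀ k, d k = (u k : ℝ) := by
    intro k
    rw [hdz1 k, hu]
    exact_mod_cast (Int.toNat_of_nonneg (hdz2 k)).symm
  have huanti : ∀ i k, i ≤ k → u k ≤ u i := by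
    have husucc : ∀ k, u (k+1) ≤ u k := by
      intro k
      have h1 := hdstep k
      rw [hcastu, hcastu] at h1
      exact_mod_cast h1
    exact fun i k h => antitone_nat_of_succ_le husucc h
  obtain ⟨K, hK⟩ : ∃ K, ∀ k, K ≤ k → u k = u K := by
    have hne : (Set.range u).Nonempty := ⟨u 0, 0, rfl⟩
    obtain ⟨K, hKc⟩ := Nat.sInf_mem hne
    refine ⟨K, fun k hk => le_antisymm (huanti K k hk) ?_⟩
    rw [hKc]; exact Nat.sInf_le ⟨k, rfl⟩
  -- the equality regime
  set K' : ℕ := n * K with hK'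
  have hKK' : K ≤ K' := by rw [hK']; exact Nat.le_mul_of_pos_left K hn
  have hdconst : ∀ s, d (K' + s) = d K' := by
    intro s
    rw [hcastu, hcastu, hK (K' + s) (le_trans hKK' (Nat.le_add_right _ _)), hK K' hKK']
  have hC_K' : C K' = xp := by rw [hK']; exact hCn K
  have hEx : ∀ s, ∃ π : Equiv.Perm (Fin m),
      X (K'+s+1) = shiftVec m (pw (K'+s)) (X (K'+s)) ∘ π ∧
      C (K'+s+1) = shiftVec m (pw (K'+s)) (C (K'+s)) ∘ π := by
    intro s
    have heq : ∑ j, (sortVec (shiftVec m (pw (K'+s)) (X (K'+s))) j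
        - sortVec (shiftVec m (pw (K'+s)) (C (K'+s))) j)^2
        = ∑ j, (shiftVec m (pw (K'+s)) (X (K'+s)) j - shiftVec m (pw (K'+s)) (C (K'+s)) j)^2 := by
      have e1 : ∑ j, (sortVec (shiftVec m (pw (K'+s)) (X (K'+s))) j
          - sortVec (shiftVec m (pw (K'+s)) (C (K'+s))) j)^2 = d (K'+s+1) := by
        simp only [hd]
        rw [hXs (K'+s), hCs (K'+s)]
      have e2 : ∑ j, (shiftVec m (pw (K'+s)) (X (K'+s)) j
          - shiftVec m (pw (K'+s)) (C (K'+s)) j)^2 = d (K'+s) := by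
        simp only [hd]
        apply Finset.sum_congr rfl; intro j _
        simp only [shiftVec]; ring
      rw [e1, e2]
      have e3 : K' + s + 1 = K' + (s+1) := rfl
      rw [e3, hdconst (s+1), hdconst s]
    obtain ⟨π, h1, h2⟩ := key_eq _ _ heq
    exact ⟨π, by rw [hXs (K'+s)]; exact h1, by rw [hCs (K'+s)]; exact h2⟩
  choose Pi hPiX hPiC2 using hEx
  -- the paired trajectories from time K'
  set q' : ℕ → Fin m := fun s => pw (K' + s) with hq'
  set vx : ℕ → Fin m → ℝ := fun s => X (K' + s) with hvx
  set vc : ℕ → Fin m → ℝ := fun s => C (K' + s) with hvc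
  have hstepx : ∀ s, vx (s+1) = shiftVec m (q' s) (vx s) ∘ (Pi s) := by
    intro s
    simp only [hvx, hq']
    exact hPiX s
  have hstepc : ∀ s, vc (s+1) = shiftVec m (q' s) (vc s) ∘ (Pi s) := by
    intro s
    simp only [hvc, hq']
    exact hPiC2 s
  set pos : ℕ → Fin m → ℝ := fun s b => vc s (cumPerm m Pi s b) with hposd
  set xps : ℕ → Fin m → ℝ := fun s b => vx s (cumPerm m Pi s b) with hxpsd
  set dlt : Fin m → ℝ := fun b => X K' b - xp b with hdltd
  have hv0c : ∀ b, vc 0 b = xp b := by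
    intro b
    simp only [hvc]
    rw [Nat.add_zero, hC_K']
  have hv0x : ∀ b, vx 0 b = X K' b := by
    intro b
    simp only [hvx]
    rw [Nat.add_zero]
  have hF1 : ∀ s b, xps s b - pos s b = dlt b := by
    intro s b
    have h := pair_invariant q' Pi vx vc hstepx hstepc s b
    simp only [hposd, hxpsd, hdltd]
    rw [h, hv0x, hv0c]
  have hF2 : ∀ s b, ∃ z:ℤ, pos s b = xp b - s + m * z := by
    intro s b
    obtain ⟨z, hz⟩ := vec_invariant q' Pi vc hstepc s b
    rw [hv0c b] at hz
    exact ⟨z, hz⟩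
  -- residues of X are all distinct
  set PiX : ℕ → Equiv.Perm (Fin m) := fun k => Tuple.sort (shiftVec m (pw k) (X k)) with hPiXd
  have hstepX0 : ∀ k, X (k+1) = shiftVec m (pw k) (X k) ∘ PiX k := by
    intro k; rw [hXs k, hPiXd]; rfl
  have hXres : ∀ k (j j' : Fin m) (z:ℤ), X k j - X k j' = m * (z:ℝ) → j = j' := by
    intro k j j' z hz
    obtain ⟨z₁, h1⟩ := vec_invariant pw PiX X hstepX0 k ((cumPerm m PiX k).symm j)
    obtain ⟨z₂, h2⟩ := vec_invariant pw PiX X hstepX0 k ((cumPerm m PiX k).symm j')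
    rw [Equiv.apply_symm_apply, hX0] at h1 h2
    set a : Fin m := (cumPerm m PiX k).symm j with had
    set a' : Fin m := (cumPerm m PiX k).symm j' with ha'd
    have h3 : ((a:ℕ):ℝ) - ((a':ℕ):ℝ) = m * ((z:ℝ) + z₂ - z₁) := by
      simp only [fundCentroid] at h1 h2
      rw [h1, h2] at hz
      linarith
    have h4 : ((a:ℕ):ℤ) - ((a':ℕ):ℤ) = m * (z + z₂ - z₁) := by exact_mod_cast h3
    have h5 : ((a:ℕ):ℤ) = ((a':ℕ):ℤ) :=
      residue_eq (Int.ofNat_nonneg _) (by exact_mod_cast a.isLt)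
        (Int.ofNat_nonneg _) (by exact_mod_cast a'.isLt) h4
    have h6 : a = a' := Fin.ext (by exact_mod_cast h5)
    have := congrArg (cumPerm m PiX k) h6
    rwa [Equiv.apply_symm_apply, Equiv.apply_symm_apply] at this
  -- positions have distinct residues
  have hposres : ∀ s (b b' : Fin m), b ≠ b' → ∀ z:ℤ, pos s b - pos s b' ≠ m * (z:ℝ) := by
    intro s b b' hne z hz
    obtain ⟨z₁, h1⟩ := hF2 s b
    obtain ⟨z₂, h2⟩ := hF2 s b'
    have h3 : xp b - xp b' = m * ((z:ℝ) - z₁ + z₂) := by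
      rw [h1, h2] at hz
      push_cast at hz ⊢
      linarith
    exact hne (hIinj b b' (z - z₁ + z₂) (by exact_mod_cast h3))
  have hposne : ∀ s (b b' : Fin m), b ≠ b' → pos s b ≠ pos s b' := by
    intro s b b' hne h
    exact hposres s b b' hne 0 (by rw [h]; simp)
  -- order transfer
  have horder : ∀ s (b b' : Fin m), pos s b < pos s b' → xps s b ≤ xps s b' := by
    intro s b b' hlt
    have hIle : cumPerm m Pi s b ≤ cumPerm m Pi s b' := by
      by_contra hcon
      push_neg at hcon
      have := (hCmono (K'+s)) hcon.le
      have h2 : pos s b' ≤ pos s b := this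
      linarith
    exact (hXmono (K'+s)) hIle
  -- at boundary times each bead reaches the top
  have htop : ∀ (b b' : Fin m), b ≠ b' → ∀ s₀:ℕ, ∃ s, s₀ ≤ s ∧ pos s b' < pos s b := by
    intro b b' hne s₀
    set jm : Fin m := ⟨m-1, by omega⟩ with hjm
    obtain ⟨c, hc⟩ := hIdiff b jm
    obtain ⟨t, ht0, z₁, hz₁⟩ := exists_nat_mul_cong m n hm hcop c s₀
    have hnts : s₀ ≤ n * t := le_trans ht0 (Nat.le_mul_of_pos_left t hn)
    have hbound : C (K' + n*t) = xp := by
      have e : K' + n*t = n*(K+t) := by rw [hK']; ring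
      rw [e]; exact hCn (K+t)
    have hposval : ∀ a : Fin m, pos (n*t) a = xp (cumPerm m Pi (n*t) a) := by
      intro a
      simp only [hposd, hvc]
      rw [hbound]
    obtain ⟨z₂, hz₂⟩ := hF2 (n*t) b
    -- xp (I b) = xp b - nt + m z₂, and nt = c + m z₁
    have hnt : ((n*t : ℕ):ℝ) = (c:ℝ) + m * (z₁:ℝ) := by
      have := congrArg (fun z : ℤ => (z:ℝ)) hz₁
      push_cast at this ⊢
      linarith
    have hIbtop : cumPerm m Pi (n*t) b = jm := by
      apply hIinj _ _ (z₂ - z₁)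
      rw [← hposval b, hz₂, hnt]
      have : xp b - xp jm = (c:ℝ) := hc
      push_cast
      linarith
    refine ⟨n*t, hnts, ?_⟩
    rw [hposval b, hposval b', hIbtop]
    have hne2 : cumPerm m Pi (n*t) b' ≠ jm := by
      rw [← hIbtop]
      intro h
      exact hne ((cumPerm m Pi (n*t)).injective h).symm
    have hlt2 : cumPerm m Pi (n*t) b' < jm := by
      have hlee : (cumPerm m Pi (n*t) b' : ℕ) < m := (cumPerm m Pi (n*t) b').isLt
      have hne3 : (cumPerm m Pi (n*t) b' : ℕ) ≠ m - 1 := by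
        intro h
        exact hne2 (Fin.ext (by rw [h, hjm]))
      have : (cumPerm m Pi (n*t) b' : ℕ) < m - 1 := by omega
      rw [Fin.lt_def, hjm]
      exact this
    have hle3 : xp (cumPerm m Pi (n*t) b') ≤ xp jm := hxp.2 hlt2.le
    rcases lt_or_eq_of_le hle3 with h | h
    · exact h
    · exact absurd (hIinj _ _ 0 (by rw [h]; simp)) hne2
  -- the crossing bound
  have hGam : ∀ (b b' : Fin m), b ≠ b' → ∃ g : ℤ, (0:ℝ) < g ∧ (g:ℝ) < m ∧
      -(g:ℝ) ≤ dlt b' - dlt b ∧ ∃ z:ℤ, (g:ℝ) = xp b' - xp b + m * z := by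
    intro b b' hne
    obtain ⟨sa, _, hsa⟩ := htop b' b hne.symm 0
    obtain ⟨sb, hsab, hsb⟩ := htop b b' hne sa
    obtain ⟨s, hnP, hP⟩ := exists_flip (P := fun s => pos s b' < pos s b)
      (not_lt.2 hsa.le) hsb hsab
    have hpre : pos s b < pos s b' :=
      lt_of_le_of_ne (not_lt.1 hnP) (hposne s b b' hne)
    have hstepb := vec_step q' Pi vc hstepc s b
    have hstepb' := vec_step q' Pi vc hstepc s b'
    have hposstep : ∀ a : Fin m, pos (s+1) a = pos s a - 1
        + (if cumPerm m Pi s a = q' s then (m:ℝ) else 0) := by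
      intro a
      simp only [hposd]
      exact vec_step q' Pi vc hstepc s a
    have hnotboth : ¬(cumPerm m Pi s b = q' s ∧ cumPerm m Pi s b' = q' s) := by
      rintro ⟨h1, h2⟩
      exact hne ((cumPerm m Pi s).injective (h1.trans h2.symm))
    have hjb : cumPerm m Pi s b = q' s := by
      by_contra hc1
      have e1 : pos (s+1) b = pos s b - 1 := by
        rw [hposstep b, if_neg hc1]; ring
      have e2 : pos s b' - 1 ≤ pos (s+1) b' := by
        rw [hposstep b']
        by_cases hc2 : cumPerm m Pi s b' = q' s
        · rw [if_pos hc2]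
          have : (0:ℝ) ≤ m := by positivity
          linarith
        · rw [if_neg hc2]; linarith
      have := hP
      rw [e1] at this
      linarith
    have hjb' : ¬ (cumPerm m Pi s b' = q' s) := fun h => hnotboth ⟨hjb, h⟩
    have e1 : pos (s+1) b = pos s b - 1 + m := by rw [hposstep b, if_pos hjb]
    have e2 : pos (s+1) b' = pos s b' - 1 := by rw [hposstep b', if_neg hjb']; ring
    have hgap : pos s b' - pos s b < m := by
      have := hP
      rw [e1, e2] at this
      linarith
    -- integrality of the gap
    obtain ⟨z₁, h1⟩ := hF2 s b
    obtain ⟨z₂, h2⟩ := hF2 s b'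
    obtain ⟨w, hw⟩ := hIdiff b' b
    refine ⟨w + m * (z₂ - z₁), ?_, ?_, ?_, ⟨z₂ - z₁, ?_⟩⟩
    · have : (((w + m * (z₂ - z₁)):ℤ):ℝ) = pos s b' - pos s b := by
        rw [h1, h2]
        push_cast
        linarith [hw]
      rw [this]
      linarith
    · have : (((w + m * (z₂ - z₁)):ℤ):ℝ) = pos s b' - pos s b := by
        rw [h1, h2]
        push_cast
        linarith [hw]
      rw [this]
      exact hgap
    · have hx1 := horder s b b' hpre
      have hd1 := hF1 s b
      have hd2 := hF1 s b'
      have : (((w + m * (z₂ - z₁)):ℤ):ℝ) = pos s b' - pos s b := by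
        rw [h1, h2]
        push_cast
        linarith [hw]
      rw [this]
      linarith
    · push_cast
      rw [hw]
  choose Gam hG1 hG2 hG3 hG4 using hGam
  have hGadd : ∀ (b b' : Fin m) (h : b ≠ b'), Gam b b' h + Gam b' b (Ne.symm h) = m := by
    intro b b' h
    obtain ⟨z, hz⟩ := hG4 b b' h
    obtain ⟨z', hz'⟩ := hG4 b' b (Ne.symm h)
    have hr : ((Gam b b' h + Gam b' b (Ne.symm h) : ℤ) : ℝ) = m * ((z + z' : ℤ):ℝ) := by
      push_cast
      rw [hz, hz']
      ring
    have hint : Gam b b' h + Gam b' b (Ne.symm h) = (m:ℤ) * (z + z') := by exact_mod_cast hr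
    have hpos1 : (0:ℤ) < Gam b b' h := by exact_mod_cast hG1 b b' h
    have hpos2 : (0:ℤ) < Gam b' b (Ne.symm h) := by exact_mod_cast hG1 b' b (Ne.symm h)
    have hlt1 : Gam b b' h < (m:ℤ) := by exact_mod_cast hG2 b b' h
    have hlt2 : Gam b' b (Ne.symm h) < (m:ℤ) := by exact_mod_cast hG2 b' b (Ne.symm h)
    exact eq_m_of m hm hint (by omega) (by omega)
  -- integrality of dlt
  have hdlt_int : ∀ b, ∃ w:ℤ, dlt b = (w:ℝ) := by
    intro b
    obtain ⟨z₁, h1⟩ := hXlat K' b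
    obtain ⟨z₂, h2⟩ := hIlat b
    refine ⟨z₁ - z₂, ?_⟩
    simp only [hdltd]
    rw [h1, h2]
    push_cast
    ring
  choose dw hdw using hdlt_int
  have hdw_sum : ∑ b, dw b = 0 := by
    have h1 : ∑ b, dlt b = 0 := by
      simp only [hdltd]
      rw [Finset.sum_sub_distrib, hXsum K', hxp.1, sub_zero]
    have h2 : ((∑ b, dw b : ℤ):ℝ) = 0 := by
      push_cast
      rw [← h1]
      exact Finset.sum_congr rfl fun b _ => (hdw b).symm
    exact_mod_cast h2
  -- the final counting argument
  have hzero : ∀ b, dw b = 0 := by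
    intro b
    set g1 : Fin m → ℤ := fun b' => if h : b = b' then 0 else Gam b b' h with hg1
    set g2 : Fin m → ℤ := fun b' => g1 b' + dw b' - dw b with hg2
    have hg1val : ∀ (b' : Fin m) (h : b ≠ b'), g1 b' = Gam b b' h := by
      intro b' h
      simp only [hg1]
      rw [dif_neg h]
    have hg1real : ∀ (b' : Fin m) (h : b ≠ b'), ∃ z:ℤ, ((g1 b' : ℤ):ℝ) = xp b' - xp b + m * z := by
      intro b' h
      rw [hg1val b' h]
      exact hG4 b b' h
    have hg2real : ∀ (b' : Fin m) (h : b ≠ b'),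
        ∃ z:ℤ, ((g2 b' : ℤ):ℝ) = X K' b' - X K' b + m * z := by
      intro b' h
      obtain ⟨z, hz⟩ := hg1real b' h
      refine ⟨z, ?_⟩
      simp only [hg2]
      push_cast
      push_cast at hz
      rw [hz, ← hdw b', ← hdw b]
      simp only [hdltd]
      ring
    have hmem1 : ∀ b' ∈ Finset.univ.erase b, g1 b' ∈ Finset.Ioo (0:ℤ) (m:ℤ) := by
      intro b' hb'
      have hne : b ≠ b' := ((Finset.mem_erase.1 hb').1).symm
      rw [Finset.mem_Ioo]
      constructor
      · rw [hg1val b' hne]; exact_mod_cast hG1 b b' hne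
      · rw [hg1val b' hne]; exact_mod_cast hG2 b b' hne
    have hmem2 : ∀ b' ∈ Finset.univ.erase b, g2 b' ∈ Finset.Ioo (0:ℤ) (m:ℤ) := by
      intro b' hb'
      have hne : b ≠ b' := ((Finset.mem_erase.1 hb').1).symm
      obtain ⟨z, hz⟩ := hg2real b' hne
      rw [Finset.mem_Ioo]
      constructor
      · have hge : (0:ℝ) ≤ ((g2 b' : ℤ):ℝ) := by
          simp only [hg2]
          push_cast
          rw [hg1val b' hne, ← hdw b', ← hdw b]
          linarith [hG3 b b' hne]
        have hneq : g2 b' ≠ 0 := by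
          intro h0
          rw [h0] at hz
          have hX : X K' b' - X K' b = m * (((-z : ℤ)):ℝ) := by
            push_cast
            push_cast at hz
            linarith
          exact hne (hXres K' b' b (-z) hX).symm
        have hge' : (0:ℤ) ≤ g2 b' := by exact_mod_cast hge
        omega
      · have hle : ((g2 b' : ℤ):ℝ) ≤ m := by
          have h3 := hG3 b' b hne.symm
          have hadd := hGadd b b' hne
          have haddr : ((Gam b b' hne : ℤ):ℝ) + ((Gam b' b hne.symm : ℤ):ℝ) = m := by
            exact_mod_cast congrArg (fun z : ℤ => (z:ℝ)) hadd
          simp only [hg2]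
          push_cast
          rw [hg1val b' hne, ← hdw b', ← hdw b]
          linarith
        have hneqm : g2 b' ≠ m := by
          intro h0
          rw [h0] at hz
          have hX : X K' b' - X K' b = m * (((1 - z : ℤ)):ℝ) := by
            push_cast
            push_cast at hz
            linarith
          exact hne (hXres K' b' b (1-z) hX).symm
        have hle' : g2 b' ≤ (m:ℤ) := by exact_mod_cast hle
        omega
    have hinj1 : ∀ a₁ ∈ Finset.univ.erase b, ∀ a₂ ∈ Finset.univ.erase b,
        g1 a₁ = g1 a₂ → a₁ = a₂ := by
      intro a₁ h1 a₂ h2 heq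
      have hne₁ : b ≠ a₁ := ((Finset.mem_erase.1 h1).1).symm
      have hne₂ : b ≠ a₂ := ((Finset.mem_erase.1 h2).1).symm
      obtain ⟨z₁, hz₁⟩ := hg1real a₁ hne₁
      obtain ⟨z₂, hz₂⟩ := hg1real a₂ hne₂
      rw [heq] at hz₁
      have : xp a₁ - xp a₂ = m * ((z₂ - z₁ : ℤ):ℝ) := by
        push_cast
        push_cast at hz₁ hz₂
        linarith
      exact hIinj a₁ a₂ (z₂ - z₁) this
    have hinj2 : ∀ a₁ ∈ Finset.univ.erase b, ∀ a₂ ∈ Finset.univ.erase b,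
        g2 a₁ = g2 a₂ → a₁ = a₂ := by
      intro a₁ h1 a₂ h2 heq
      have hne₁ : b ≠ a₁ := ((Finset.mem_erase.1 h1).1).symm
      have hne₂ : b ≠ a₂ := ((Finset.mem_erase.1 h2).1).symm
      obtain ⟨z₁, hz₁⟩ := hg2real a₁ hne₁
      obtain ⟨z₂, hz₂⟩ := hg2real a₂ hne₂
      rw [heq] at hz₁
      have : X K' a₁ - X K' a₂ = m * ((z₂ - z₁ : ℤ):ℝ) := by
        push_cast
        push_cast at hz₁ hz₂
        linarith
      exact hXres K' a₁ a₂ (z₂ - z₁) this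
    have hcards : (Finset.Ioo (0:ℤ) (m:ℤ)).card = (Finset.univ.erase b).card := by
      rw [Int.card_Ioo, Finset.card_erase_of_mem (Finset.mem_univ b), Finset.card_univ,
        Fintype.card_fin]
      omega
    have hs1 := sum_eq_sum_of_inj (Finset.univ.erase b) g1 (Finset.Ioo (0:ℤ) (m:ℤ))
      hmem1 hinj1 hcards
    have hs2 := sum_eq_sum_of_inj (Finset.univ.erase b) g2 (Finset.Ioo (0:ℤ) (m:ℤ))
      hmem2 hinj2 hcards
    have hcomb : ∑ b' ∈ Finset.univ.erase b, (g2 b' - g1 b') = 0 := by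
      rw [Finset.sum_sub_distrib, hs1, hs2, sub_self]
    have hcomb2 : ∑ b' ∈ Finset.univ.erase b, (dw b' - dw b) = 0 := by
      rw [← hcomb]
      exact Finset.sum_congr rfl fun b' _ => by simp only [hg2]; ring
    rw [Finset.sum_sub_distrib, Finset.sum_const] at hcomb2
    have herase : ∑ b' ∈ Finset.univ.erase b, dw b' = - dw b := by
      have h := Finset.add_sum_erase Finset.univ dw (Finset.mem_univ b)
      rw [hdw_sum] at h
      omega
    rw [herase] at hcomb2
    have hcard2 : (Finset.univ.erase b).card = m - 1 := by
      rw [Finset.card_erase_of_mem (Finset.mem_univ b), Finset.card_univ, Fintype.card_fin]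
    rw [hcard2, nsmul_eq_mul] at hcomb2
    have hc : ((m - 1 : ℕ):ℤ) = (m:ℤ) - 1 := by
      have : 1 ≤ m := hm
      push_cast [Nat.cast_sub this]
      ring
    rw [hc] at hcomb2
    have hmz : (m:ℤ) * dw b = 0 := by linarith
    rcases mul_eq_zero.1 hmz with h | h
    · exfalso
      have : (m:ℤ) ≠ 0 := by exact_mod_cast hm.ne'
      exact this h
    · exact h
  -- conclusion
  have hXK' : X K' = xp := by
    funext b
    have h1 : dlt b = 0 := by
      rw [hdw b]
      exact_mod_cast congrArg (fun z : ℤ => (z:ℝ)) (hzero b)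
    simp only [hdltd] at h1
    linarith
  have hXC : ∀ s, X (K' + s) = C (K' + s) := by
    intro s
    induction s with
    | zero => rw [Nat.add_zero, hXK', hC_K']
    | succ s ih =>
      have e : K' + (s+1) = (K'+s)+1 := rfl
      rw [e, hXs (K'+s), hCs (K'+s), ih]
  refine ⟨K, fun k hk => ?_⟩
  have hle : K' ≤ n * k := by rw [hK']; exact Nat.mul_le_mul_left n hk
  obtain ⟨s, hs⟩ := Nat.exists_eq_add_of_le hle
  show X (n*k) = xp
  rw [hs, hXC s, ← hs]
  exact hCn k
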